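/- Sure Thing Principle for weight models: for every epistemic weight model M, world w, agent a, and L_CN formulas φ, ψ, the formula B_a(φ,ψ) ∧ B_a(¬φ,ψ) → B_a(⊤,ψ) is true at w. Equivalently: if M,w ⊨ B_a(φ,ψ) and M,w ⊨ B_a(¬φ,ψ) then M,w ⊨ B_a(⊤,ψ). -/

import Mathlib

/-- The language L_CN: `φ ::= ⊤ | p | ¬φ | (φ∧φ) | B_a(φ,φ)`. -/
inductive CNForm (Agt Prp : Type) : Type
  | top : CNForm Agt Prp
  | atom : Prp → CNForm Agt Prp
  | neg : CNForm Agt Prp → CNForm Agt Prp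
  | and : CNForm Agt Prp → CNForm Agt Prp → CNForm Agt Prp
  | bel : Agt → CNForm Agt Prp → CNForm Agt Prp → CNForm Agt Prp

/-- An epistemic weight model `(W, ∼, L, V)`: `W` nonempty countable, `∼_a`
equivalence relations, `L_a : W → ℚ` positive with summable weights on each
knowledge cell, `V` a valuation. -/
structure WeightModel (Agt Prp W : Type) : Type where
  nonempty : Nonempty W
  countable : Countable W
  sim : Agt → W → W → Prop
  equiv : ∀ a, Equivalence (sim a)
  wt : Agt → W → ℚ
  wt_pos : ∀ a w, 0 < wt a w
  wt_summable : ∀ a w, Summable (fun u : {v // sim a w v} => ((wt a u.1 : ℚ) : ℝ))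
  V : Prp → Set W

/-- Truth of an L_CN formula in an epistemic weight model:
`B_a(φ,ψ)` holds at `w` iff the total weight of `[w]_a ∩ ⟦φ∧ψ⟧` strictly
exceeds the total weight of `[w]_a ∩ ⟦φ∧¬ψ⟧`. -/
def WeightModel.truth {Agt Prp W : Type} (M : WeightModel Agt Prp W) :
    CNForm Agt Prp → W → Prop
  | .top, _ => True
  | .atom p, w => w ∈ M.V p
  | .neg φ, w => ¬ M.truth φ w
  | .and φ ψ, w => M.truth φ w ∧ M.truth ψ w
  | .bel a φ ψ, w =>
      (∑' u : {v // M.sim a w v ∧ M.truth φ v ∧ M.truth ψ v}, ((M.wt a u.1 : ℚ) : ℝ)) >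
      (∑' u : {v // M.sim a w v ∧ M.truth φ v ∧ ¬ M.truth ψ v}, ((M.wt a u.1 : ℚ) : ℝ))

/-- Sure Thing Principle for epistemic weight models:
if `M,w ⊨ B_a(φ,ψ)` and `M,w ⊨ B_a(¬φ,ψ)` then `M,w ⊨ B_a(⊤,ψ)`. -/
theorem weight_sure_thing {Agt Prp W : Type} (M : WeightModel Agt Prp W)
    (w : W) (a : Agt) (φ ψ : CNForm Agt Prp)
    (h1 : M.truth (.bel a φ ψ) w) (h2 : M.truth (.bel a (.neg φ) ψ) w) :
    M.truth (.bel a .top ψ) w := by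
  set f : W → ℝ := fun v => ((M.wt a v : ℚ) : ℝ) with hf
  have hf0 : ∀ v, 0 ≤ f v := fun v => by
    simpa [hf] using (M.wt_pos a v).le
  have hC : Summable (Set.indicator {v | M.sim a w v} f) :=
    summable_subtype_iff_indicator.mp (M.wt_summable a w)
  have hsub : ∀ S : Set W, S ⊆ {v | M.sim a w v} →
      Summable (fun u : S => f u) := by
    intro S hS
    exact summable_subtype_iff_indicator.mpr <| hC.of_nonneg_of_le (fun v => Set.indicator_nonneg (fun x _ => hf0 x) v)
      (fun v => Set.indicator_le_indicator_of_subset hS hf0 v)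
  simp only [WeightModel.truth] at h1 h2 ⊢
  have key : ∀ (P : W → Prop),
      (∑' u : {v // M.sim a w v ∧ M.truth CNForm.top v ∧ P v}, f u.1) =
      (∑' u : {v // M.sim a w v ∧ M.truth φ v ∧ P v}, f u.1) +
      (∑' u : {v // M.sim a w v ∧ ¬ M.truth φ v ∧ P v}, f u.1) := by
    intro P
    have hA : Summable (fun u : {v | M.sim a w v ∧ M.truth φ v ∧ P v} => f u.1) :=
      hsub _ (fun v hv => hv.1)
    have hB : Summable (fun u : {v | M.sim a w v ∧ ¬ M.truth φ v ∧ P v} => f u.1) :=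
      hsub _ (fun v hv => hv.1)
    have hdisj : Disjoint {v | M.sim a w v ∧ M.truth φ v ∧ P v}
        {v | M.sim a w v ∧ ¬ M.truth φ v ∧ P v} := by
      rw [Set.disjoint_left]
      rintro v ⟨_, hφ, _⟩ ⟨_, hnφ, _⟩
      exact hnφ hφ
    have hset : {v | M.sim a w v ∧ M.truth CNForm.top v ∧ P v} =
        {v | M.sim a w v ∧ M.truth φ v ∧ P v} ∪
        {v | M.sim a w v ∧ ¬ M.truth φ v ∧ P v} := by
      ext v
      simp only [Set.mem_setOf_eq, Set.mem_union, WeightModel.truth, true_and]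
      by_cases hφ : M.truth φ v <;> tauto
    calc (∑' u : {v // M.sim a w v ∧ M.truth CNForm.top v ∧ P v}, f u.1)
        = ∑' u : ({v | M.sim a w v ∧ M.truth φ v ∧ P v} ∪
            {v | M.sim a w v ∧ ¬ M.truth φ v ∧ P v} : Set W), f u.1 := by
          exact tsum_congr_set_coe _ hset
      _ = _ := Summable.tsum_union_disjoint hdisj hA hB
  have e1 := key (fun v => M.truth ψ v)
  have e2 := key (fun v => ¬ M.truth ψ v)
  simp only [WeightModel.truth] at e1 e2
  rw [e1, e2]
  exact add_lt_add h1 h2
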